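/- arXiv:2311.07846 — 3 statements merged into one kernel-verified Lean document; each statement's English description precedes it below -/
import Mathlib

section
/- Let G be a finite group acting transitively on a finite set Ω, let A be a subgroup of G, and let B be a proper normal subgroup of A. Let ω_1, …, ω_k ∈ Ω with k ≥ 2 be such that the B-orbits ω_i^B are pairwise distinct for i ≠ j and ω_1^A = ω_1^B ∪ ω_2^B ∪ … ∪ ω_k^B. Let X be a non-empty proper subset of Ω, let X^G = {X^g : g ∈ G}, and let Δ = {Y ∈ X^G : Y ∩ ω_1^A ≠ ∅}. If B acts transitively on each A-orbit of Δ, then the pair (X, J), where J is the multiset Ω + k·ω_1^B − ω_1^A (that is, μ_J(ω) = 1 + k·[ω ∈ ω_1^B] − [ω ∈ ω_1^A]), is a witness to G being non-spreading; in particular, G is non-spreading. -/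
open scoped Pointwise

/-- A subset `X` of `Ω` is *trivial* if its indicator function is constant
(i.e. `X = ∅` or `X = univ`) or there is a unique point in `X`. -/
def TrivialSet {Ω : Type*} (X : Set Ω) : Prop :=
  X = ∅ ∨ X = Set.univ ∨ ∃! ω, ω ∈ X

/-- A multiset of elements of `Ω`, given by its multiplicity function `μ`, is *trivial*
if `μ` is constant on `Ω` or there is a unique point with nonzero multiplicity. -/
def TrivialMultiset {Ω : Type*} (μ : Ω → ℕ) : Prop :=
  (∀ a b : Ω, μ a = μ b) ∨ ∃! ω, μ ω ≠ 0

/-- `(X, J)` (where the multiset `J` is given by its multiplicity function `μ`) is a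
*witness* to `G` being non-spreading on `Ω`: `X` and `J` are nontrivial, `|J|` divides
`|Ω|`, and `∑_{x ∈ X^g} μ_J(x)` is constant over `g ∈ G`. -/
def SpreadingWitness (G : Type*) (Ω : Type*) [Group G] [Fintype Ω] [MulAction G Ω]
    (X : Set Ω) (μ : Ω → ℕ) : Prop :=
  ¬ TrivialSet X ∧ ¬ TrivialMultiset μ ∧
    (∑ ω : Ω, μ ω) ∣ Fintype.card Ω ∧
    ∃ c : ℕ, ∀ g : G, ∑ ω : Ω, (g • X).indicator μ ω = c

/-- A (transitive) group `G` on a finite set `Ω` is *non-spreading* if some witness exists. -/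
def IsNonSpreading (G : Type*) (Ω : Type*) [Group G] [Fintype Ω] [MulAction G Ω] : Prop :=
  ∃ (X : Set Ω) (μ : Ω → ℕ), SpreadingWitness G Ω X μ

/-- Theorem 2.2, the AB-lemma. Let `G` be a finite group acting transitively
on a finite set `Ω`, `A ≤ G`, and `B` a proper normal subgroup of `A`. Let `ω ⟨0, by omega⟩, …, ω (k-1)`
(`k ≥ 2`) have pairwise distinct `B`-orbits whose union is the `A`-orbit of `ω ⟨0, by omega⟩`. Let `X` be a
nonempty proper subset of `Ω` and suppose `B` is transitive on each `A`-orbit of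
`Δ = {Y ∈ X^G : Y ∩ (ω ⟨0, by omega⟩)^A ≠ ∅}`. Then `(X, Ω + k·(ω ⟨0, by omega⟩)^B − (ω ⟨0, by omega⟩)^A)` is a witness to `G`
being non-spreading; in particular `G` is non-spreading. -/
theorem AB_lemma (G : Type*) [Group G] [Finite G] (Ω : Type*) [Fintype Ω] [MulAction G Ω]
    [MulAction.IsPretransitive G Ω]
    (A B : Subgroup G) (hBA : B ≤ A) (hBneA : B ≠ A)
    (hnorm : ∀ a ∈ A, ∀ b ∈ B, a * b * a⁻¹ ∈ B)
    (k : ℕ) (hk : 2 ≤ k) (ω : Fin k → Ω)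
    (hdist : ∀ i j : Fin k, i ≠ j → MulAction.orbit B (ω i) ≠ MulAction.orbit B (ω j))
    (hcover : MulAction.orbit A (ω ⟨0, by omega⟩) = ⋃ i, MulAction.orbit B (ω i))
    (X : Set Ω) (hX1 : X.Nonempty) (hX2 : X ≠ Set.univ)
    (htrans : ∀ Y : Set Ω,
      ((∃ g : G, g • X = Y) ∧ (Y ∩ MulAction.orbit A (ω ⟨0, by omega⟩)).Nonempty) →
        ∀ a : A, ∃ b : B, (b : G) • Y = (a : G) • Y) :
    SpreadingWitness G Ω X
        (fun x => 1 + k * (MulAction.orbit B (ω ⟨0, by omega⟩)).indicator 1 x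
          - (MulAction.orbit A (ω ⟨0, by omega⟩)).indicator 1 x) ∧
      IsNonSpreading G Ω := by
  classical
  set i0 : Fin k := ⟨0, by omega⟩ with hi0
  set i1 : Fin k := ⟨1, by omega⟩ with hi1
  set Bo := MulAction.orbit B (ω i0) with hBo
  set Ao := MulAction.orbit A (ω i0) with hAo
  set N : Set Ω → ℕ := fun S => ∑ x : Ω, S.indicator 1 x with hN
  set μ : Ω → ℕ := fun x => 1 + k * Bo.indicator 1 x - Ao.indicator 1 x with hμ
  -- Conjugating B-orbits by elements of A
  have horbB : ∀ a : G, a ∈ A → ∀ x : Ω,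
      a • (MulAction.orbit B x) = MulAction.orbit B (a • x) := by
    intro a ha x
    ext y
    constructor
    · rintro ⟨z, hz, rfl⟩
      obtain ⟨b, rfl⟩ := hz
      refine ⟨⟨a * b * a⁻¹, hnorm a ha b b.2⟩, ?_⟩
      simp [Subgroup.smul_def, mul_smul]
    · rintro ⟨b, rfl⟩
      refine ⟨(a⁻¹ * b * a) • x, ⟨⟨a⁻¹ * (b : G) * a⁻¹⁻¹, hnorm a⁻¹ (A.inv_mem ha) b b.2⟩, ?_⟩, ?_⟩
      · simp [Subgroup.smul_def, mul_smul]
      · simp [Subgroup.smul_def, mul_smul]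
  -- distinct B-orbits are disjoint
  have hdisj : ∀ i j : Fin k, i ≠ j →
      Disjoint (MulAction.orbit B (ω i)) (MulAction.orbit B (ω j)) := by
    intro i j hij
    rw [Set.disjoint_left]
    intro x hxi hxj
    exact hdist i j hij (by
      rw [← MulAction.orbit_eq_iff.2 hxi, ← MulAction.orbit_eq_iff.2 hxj])
  have hmemA : ∀ i : Fin k, ω i ∈ Ao := by
    intro i
    rw [hcover]
    exact Set.mem_iUnion.2 ⟨i, MulAction.mem_orbit_self _⟩
  have hBoAo : Bo ⊆ Ao := by
    rw [hcover]
    exact Set.subset_iUnion (fun i => MulAction.orbit B (ω i)) i0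
  -- counting function is translation invariant
  have hNsmul : ∀ (g : G) (S : Set Ω), N (g • S) = N S := by
    intro g S
    rw [hN]
    simp only
    rw [← Equiv.sum_comp (MulAction.toPerm g) ((g • S).indicator 1)]
    refine Finset.sum_congr rfl fun x _ => ?_
    simp [Set.indicator_apply, Set.smul_mem_smul_set_iff]
  have hNempty : N ∅ = 0 := by simp [hN]
  -- counting function is additive on disjoint unions
  have hNiUnion : ∀ S : Fin k → Set Ω, (∀ i j, i ≠ j → Disjoint (S i) (S j)) →
      N (⋃ i, S i) = ∑ i, N (S i) := by
    intro S hS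
    have hpt : ∀ x : Ω, (⋃ i, S i).indicator (1 : Ω → ℕ) x = ∑ i, (S i).indicator 1 x := by
      intro x
      by_cases hx : x ∈ ⋃ i, S i
      · obtain ⟨j, hj⟩ := Set.mem_iUnion.1 hx
        rw [Set.indicator_of_mem hx, Finset.sum_eq_single j]
        · rw [Set.indicator_of_mem hj]
        · intro i _ hij
          exact Set.indicator_of_notMem
            (fun hxi => Set.disjoint_left.1 (hS i j hij) hxi hj) _
        · intro h; exact absurd (Finset.mem_univ _) h
      · rw [Set.indicator_of_notMem hx]
        symm
        refine Finset.sum_eq_zero fun i _ => ?_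
        exact Set.indicator_of_notMem (fun h => hx (Set.mem_iUnion.2 ⟨i, h⟩)) _
    rw [hN]
    simp only
    rw [Finset.sum_congr rfl fun x _ => hpt x, Finset.sum_comm]
  -- the key counting lemma
  have hkey : ∀ Y : Set Ω, (∀ a : A, ∃ b : B, (b : G) • Y = (a : G) • Y) →
      ∀ i : Fin k, N (Y ∩ MulAction.orbit B (ω i)) = N (Y ∩ Bo) := by
    intro Y hY i
    obtain ⟨a, ha⟩ := hmemA i
    have ha' : (a : G) • ω i0 = ω i := ha
    obtain ⟨b, hb⟩ := hY a⁻¹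
    have h1 : MulAction.orbit B (ω i) = (a : G) • Bo := by
      rw [hBo, horbB a a.2 (ω i0), ha']
    have h2 : (b : G)⁻¹ • Bo = Bo := by
      rw [hBo, horbB ((b : G)⁻¹) (A.inv_mem (hBA b.2)) (ω i0)]
      refine MulAction.orbit_eq_iff.2 ?_
      exact ⟨b⁻¹, by simp [Subgroup.smul_def]⟩
    have hb' : (a : G)⁻¹ • Y = (b : G) • Y := by
      rw [hb]; norm_cast
    calc N (Y ∩ MulAction.orbit B (ω i)) = N ((a : G)⁻¹ • (Y ∩ (a : G) • Bo)) := by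
          rw [h1, hNsmul]
      _ = N (((a : G)⁻¹ • Y) ∩ Bo) := by rw [Set.smul_set_inter, inv_smul_smul]
      _ = N (((b : G) • Y) ∩ Bo) := by rw [hb']
      _ = N ((b : G) • (Y ∩ (b : G)⁻¹ • Bo)) := by rw [Set.smul_set_inter, smul_inv_smul]
      _ = N (Y ∩ (b : G)⁻¹ • Bo) := hNsmul _ _
      _ = N (Y ∩ Bo) := by rw [h2]
  have hcount : ∀ Y : Set Ω, (∀ a : A, ∃ b : B, (b : G) • Y = (a : G) • Y) →
      N (Y ∩ Ao) = k * N (Y ∩ Bo) := by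
    intro Y hY
    have h1 : Y ∩ Ao = ⋃ i, Y ∩ MulAction.orbit B (ω i) := by
      rw [hcover, Set.inter_iUnion]
    rw [h1, hNiUnion _ (fun i j hij =>
      (hdisj i j hij).mono Set.inter_subset_right Set.inter_subset_right)]
    rw [Finset.sum_congr rfl fun i _ => hkey Y hY i]
    simp [mul_comm]
  -- the sum of μ over a set
  have hSum : ∀ Y : Set Ω, (∑ x : Ω, Y.indicator μ x)
      = (N Y + k * N (Y ∩ Bo)) - N (Y ∩ Ao) := by
    intro Y
    have hpt : ∀ x : Ω, Y.indicator μ x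
        = (Y.indicator 1 x + k * (Y ∩ Bo).indicator 1 x) - (Y ∩ Ao).indicator 1 x := by
      intro x
      rw [hμ]
      simp only [Set.indicator_apply, Set.mem_inter_iff, Pi.one_apply]
      by_cases hx : x ∈ Y <;> by_cases hb : x ∈ Bo <;> by_cases ha : x ∈ Ao <;>
        simp [hx, hb, ha]
    rw [Finset.sum_congr rfl fun x _ => hpt x]
    rw [Finset.sum_tsub_distrib]
    · rw [Finset.sum_add_distrib, ← Finset.mul_sum]
    · intro x _
      by_cases h : x ∈ Y ∩ Ao
      · rw [Set.indicator_of_mem h, Set.indicator_of_mem h.1]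
        exact le_self_add
      · rw [Set.indicator_of_notMem h]
        exact Nat.zero_le _
  -- values of μ
  have hω0Bo : ω i0 ∈ Bo := MulAction.mem_orbit_self _
  have hi01 : i1 ≠ i0 := by
    rw [hi0, hi1, Ne, Fin.mk.injEq]
    norm_num
  have hω1Bo : ω i1 ∉ Bo := by
    intro h
    exact hdist i1 i0 hi01 (MulAction.orbit_eq_iff.2 h)
  have hμ0 : μ (ω i0) = k := by
    rw [hμ]
    simp only [Set.indicator_of_mem hω0Bo, Set.indicator_of_mem (hBoAo hω0Bo), Pi.one_apply]
    omega
  have hμ1 : μ (ω i1) = 0 := by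
    rw [hμ]
    simp only [Set.indicator_of_notMem hω1Bo, Set.indicator_of_mem (hmemA i1), Pi.one_apply]
    omega
  -- universal counting identity
  have huniv : N Ao = k * N Bo := by
    have := hcount Set.univ (fun a => ⟨1, by simp⟩)
    simpa using this
  have hNuniv : N Set.univ = Fintype.card Ω := by simp [hN]
  -- the witness
  have hw : SpreadingWitness G Ω X μ := by
    refine ⟨?_, ?_, ?_, ?_⟩
    · -- X is nontrivial
      rintro (h | h | ⟨x0, hx0, hux0⟩)
      · exact hX1.ne_empty h
      · exact hX2 h
      · have hXsing : X = {x0} := Set.eq_singleton_iff_unique_mem.2 ⟨hx0, hux0⟩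
        obtain ⟨g, hg⟩ := MulAction.exists_smul_eq G x0 (ω i0)
        have hgX : g • X = {ω i0} := by rw [hXsing, Set.smul_set_singleton, hg]
        obtain ⟨a, ha⟩ := hmemA i1
        have ha' : (a : G) • ω i0 = ω i1 := ha
        obtain ⟨b, hb⟩ := htrans ({ω i0}) ⟨⟨g, hgX⟩, ⟨ω i0, rfl, hBoAo hω0Bo⟩⟩ a
        rw [Set.smul_set_singleton, Set.smul_set_singleton, Set.singleton_eq_singleton_iff] at hb
        apply hω1Bo
        rw [← ha', ← hb]
        exact ⟨b, rfl⟩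
    · -- μ is nontrivial
      rintro (h | ⟨x, hx, hux⟩)
      · have := h (ω i0) (ω i1)
        rw [hμ0, hμ1] at this
        omega
      · have hx0 : ω i0 = x := hux (ω i0) (by show μ (ω i0) ≠ 0; rw [hμ0]; omega)
        have hzero : ∀ y : Ω, y ≠ ω i0 → y ∈ Ao ∧ y ∉ Bo := by
          intro y hy
          have hμy : μ y = 0 := by
            by_contra h
            exact hy ((hux y h).trans hx0.symm)
          rw [hμ] at hμy
          simp only [Set.indicator_apply, Pi.one_apply] at hμy
          by_cases hb : y ∈ Bo <;> by_cases ha : y ∈ Ao <;>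
            simp [hb, ha] at hμy <;> first
              | exact absurd (hBoAo hb) ha
              | omega
              | exact ⟨ha, hb⟩
        have hAouniv : Ao = Set.univ := by
          ext y
          simp only [Set.mem_univ, iff_true]
          by_cases hy : y = ω i0
          · rw [hy]; exact hBoAo hω0Bo
          · exact (hzero y hy).1
        have hBosing : Bo = {ω i0} := by
          refine Set.eq_singleton_iff_unique_mem.2 ⟨hω0Bo, fun y hy => ?_⟩
          by_contra hy'
          exact (hzero y hy').2 hy
        have htrivB : ∀ (b : B) (y : Ω), (b : G) • y = y := by
          intro b y
          have hy : y ∈ Ao := hAouniv ▸ Set.mem_univ y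
          obtain ⟨a, ha⟩ := hy
          have ha' : (a : G) • ω i0 = y := ha
          have : MulAction.orbit B y = {y} := by
            rw [← ha', ← horbB a a.2 (ω i0), ← hBo, hBosing, Set.smul_set_singleton]
          have hby : (b : G) • y ∈ MulAction.orbit B y := ⟨b, rfl⟩
          rw [this] at hby
          exact hby
        have hXinv : ∀ a : A, (a : G) • X = X := by
          intro a
          obtain ⟨b, hb⟩ := htrans X ⟨⟨1, one_smul _ _⟩, by
            rw [hAouniv, Set.inter_univ]; exact hX1⟩ a
          rw [← hb]
          ext z
          constructor
          · rintro ⟨w, hw, rfl⟩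
            simpa [htrivB b w] using hw
          · intro hz
            exact ⟨z, hz, htrivB b z⟩
        apply hX2
        obtain ⟨x₀, hx₀⟩ := hX1
        ext y
        simp only [Set.mem_univ, iff_true]
        obtain ⟨a₁, ha₁⟩ := hAouniv ▸ Set.mem_univ y
        obtain ⟨a₂, ha₂⟩ := hAouniv ▸ Set.mem_univ x₀
        have : ((a₁ * a₂⁻¹ : A) : G) • x₀ = y := by
          rw [← ha₁, ← ha₂]
          simp [Subgroup.smul_def, mul_smul]
        rw [← hXinv (a₁ * a₂⁻¹)]
        exact ⟨x₀, hx₀, this⟩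
    · -- divisibility
      have : (∑ x : Ω, μ x) = Fintype.card Ω := by
        have h1 : (∑ x : Ω, μ x) = ∑ x : Ω, (Set.univ : Set Ω).indicator μ x := by
          simp [Set.indicator_univ]
        rw [h1, hSum, Set.univ_inter, Set.univ_inter, huniv, Nat.add_sub_cancel, hNuniv]
      rw [this]
    · -- constancy
      refine ⟨N X, fun g => ?_⟩
      rw [hSum (g • X)]
      have hid : N (g • X ∩ Ao) = k * N (g • X ∩ Bo) := by
        by_cases hne : (g • X ∩ Ao).Nonempty
        · exact hcount _ (htrans _ ⟨⟨g, rfl⟩, hne⟩)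
        · have h1 : g • X ∩ Ao = ∅ := Set.not_nonempty_iff_eq_empty.1 hne
          have h2 : g • X ∩ Bo = ∅ := by
            rw [← Set.subset_empty_iff, ← h1]
            exact Set.inter_subset_inter_right _ hBoAo
          rw [h1, h2, hNempty, mul_zero]
      rw [hid, Nat.add_sub_cancel, hNsmul]
  exact ⟨hw, X, μ, hw⟩
end

section
/- Let T be a non-abelian finite simple group, and suppose there exist a proper subgroup A of T and a proper normal subgroup B of A such that A = B(A ∩ A^τ) for all τ ∈ Aut(T). Then the pair (A, J), where J is the multiset Ω + |A:B|·B − A on Ω = T (that is, μ_J(x) = |A:B| for x ∈ B, μ_J(x) = 0 for x ∈ A \ B, and μ_J(x) = 1 for x ∈ T \ A), is a witness to W(T) being non-spreading in its action on Ω = T; in particular, W(T) is non-spreading. -/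
open scoped Pointwise

/-- The group `W(T) = ⟨ρ₁(T×T), ρ₂(Aut T), σ⟩ ≤ Sym(T)`, where `ρ₁(t₁,t₂) : x ↦ t₁⁻¹ x t₂`,
`ρ₂(τ) : x ↦ τ x` and `σ : x ↦ x⁻¹`. -/
def diagW (T : Type*) [Group T] : Subgroup (Equiv.Perm T) :=
  Subgroup.closure
    ({e : Equiv.Perm T | ∃ t₁ t₂ : T, ∀ x, e x = t₁⁻¹ * x * t₂} ∪
      {e : Equiv.Perm T | ∃ τ : MulAut T, ∀ x, e x = τ x} ∪
      {e : Equiv.Perm T | ∀ x, e x = x⁻¹})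

private noncomputable def mufun {T : Type*} [Group T] (A B : Subgroup T) : T → ℕ := fun x =>
  (B : Set T).indicator (fun _ => B.relIndex A) x + ((A : Set T)ᶜ).indicator (fun _ => 1) x

private lemma auxCard {T : Type*} [Group T] [Fintype T] (A B : Subgroup T) (hBA : B ≤ A)
    (hnorm : ∀ a ∈ A, ∀ b ∈ B, a * b * a⁻¹ ∈ B)
    (τ : MulAut T)
    (hsup : ∀ a ∈ A, ∃ b ∈ B, ∃ c ∈ A ⊓ A.map τ.toMonoidHom, a = b * c) :
    Nat.card ↥(A ⊓ A.comap τ.toMonoidHom) =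
      B.relIndex A * Nat.card ↥(A ⊓ B.comap τ.toMonoidHom) := by
  classical
  haveI hN : (B.subgroupOf A).Normal := ⟨fun n hn g => hnorm g.1 g.2 n.1 hn⟩
  have memKA : ∀ x : T, x ∈ A ⊓ A.comap τ.toMonoidHom ↔ x ∈ A ∧ τ x ∈ A := fun x => by
    simp [Subgroup.mem_inf, Subgroup.mem_comap]
  have memKB : ∀ x : T, x ∈ A ⊓ B.comap τ.toMonoidHom ↔ x ∈ A ∧ τ x ∈ B := fun x => by
    simp [Subgroup.mem_inf, Subgroup.mem_comap]
  set KA := A ⊓ A.comap τ.toMonoidHom with hKA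
  set KB := A ⊓ B.comap τ.toMonoidHom with hKB
  let ψ : KA →* A :=
    { toFun := fun k => ⟨τ k.1, ((memKA k.1).mp k.2).2⟩
      map_one' := by ext; simp
      map_mul' := by intro x y; ext; simp }
  let φ := (QuotientGroup.mk' (B.subgroupOf A)).comp ψ
  have hsurj : Function.Surjective φ := by
    intro q
    obtain ⟨a, rfl⟩ := QuotientGroup.mk'_surjective _ q
    obtain ⟨b₀, hb₀, c, hc, heq⟩ := hsup a.1 a.2
    obtain ⟨hcA, hcM⟩ := Subgroup.mem_inf.mp hc
    obtain ⟨z, hz, hzc⟩ := Subgroup.mem_map.mp hcM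
    refine ⟨⟨z, (memKA z).mpr ⟨hz, by rw [show τ z = c from hzc]; exact hcA⟩⟩, ?_⟩
    show QuotientGroup.mk' (B.subgroupOf A) (ψ _) = QuotientGroup.mk' (B.subgroupOf A) a
    have h1 : ψ ⟨z, (memKA z).mpr ⟨hz, by rw [show τ z = c from hzc]; exact hcA⟩⟩ = ⟨c, hcA⟩ :=
      Subtype.ext hzc
    rw [h1]
    have : (⟨c, hcA⟩ : A)⁻¹ * a ∈ B.subgroupOf A := by
      have : (c⁻¹ * a.1 : T) ∈ B := by
        rw [heq]
        have := hnorm c⁻¹ (A.inv_mem hcA) b₀ hb₀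
        simpa [mul_assoc] using this
      simpa [Subgroup.mem_subgroupOf] using this
    exact (QuotientGroup.eq (s := B.subgroupOf A)).mpr this
  have hker : ∀ k : KA, k ∈ φ.ker ↔ τ (k : T) ∈ B := by
    intro k
    simp only [φ, MonoidHom.mem_ker, MonoidHom.comp_apply, QuotientGroup.mk'_apply,
      QuotientGroup.eq_one_iff, Subgroup.mem_subgroupOf]
    rfl
  have eker : ↥φ.ker ≃ ↥KB :=
    { toFun := fun k => ⟨k.1.1, (memKB _).mpr ⟨((memKA _).mp k.1.2).1, (hker k.1).mp k.2⟩⟩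
      invFun := fun x => ⟨⟨x.1, (memKA _).mpr ⟨((memKB _).mp x.2).1, hBA ((memKB _).mp x.2).2⟩⟩,
        (hker _).mpr ((memKB _).mp x.2).2⟩
      left_inv := fun k => by ext; rfl
      right_inv := fun x => rfl }
  calc Nat.card ↥KA = Nat.card (KA ⧸ φ.ker) * Nat.card ↥φ.ker :=
        Subgroup.card_eq_card_quotient_mul_card_subgroup _
    _ = B.relIndex A * Nat.card ↥KB := by
        rw [Nat.card_congr (QuotientGroup.quotientKerEquivOfSurjective φ hsurj).toEquiv,
          Nat.card_congr eker]
        rfl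

private lemma core2 {T : Type*} [Group T] [Fintype T] (A B : Subgroup T) (hBA : B ≤ A)
    (hnorm : ∀ a ∈ A, ∀ b ∈ B, a * b * a⁻¹ ∈ B)
    (hsupp : ∀ τ : MulAut T, ∀ a ∈ A, ∃ b ∈ B, ∃ c ∈ A ⊓ A.map τ.toMonoidHom, a = b * c)
    (τ : MulAut T) (d : T) (hd : d ∈ A) :
    B.relIndex A * Nat.card {y : T // y ∈ A ∧ d * τ y ∈ B}
      = Nat.card {y : T // y ∈ A ∧ d * τ y ∈ A} := by
  have eA : Nat.card {y : T // y ∈ A ∧ d * τ y ∈ A} = Nat.card ↥(A ⊓ A.comap τ.toMonoidHom) := by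
    refine Nat.card_congr (Equiv.subtypeEquivRight fun x => ?_)
    simp [Subgroup.mem_inf, Subgroup.mem_comap, A.mul_mem_cancel_left hd]
  obtain ⟨b₀, hb₀, c, hc, heq⟩ := hsupp τ d hd
  obtain ⟨hcA, hcM⟩ := Subgroup.mem_inf.mp hc
  obtain ⟨z, hz, hzc⟩ := Subgroup.mem_map.mp hcM
  have hzc' : τ z = c := hzc
  have eB : Nat.card {y : T // y ∈ A ∧ d * τ y ∈ B} = Nat.card ↥(A ⊓ B.comap τ.toMonoidHom) := by
    refine Nat.card_congr
      { toFun := fun y => ⟨z * y.1, Subgroup.mem_inf.mpr ⟨A.mul_mem hz y.2.1, ?_⟩⟩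
        invFun := fun k => ⟨z⁻¹ * k.1,
          A.mul_mem (A.inv_mem hz) (Subgroup.mem_inf.mp k.2).1, ?_⟩
        left_inv := fun y => by ext; simp
        right_inv := fun k => by ext; simp }
    · obtain ⟨y, hyA, hyB⟩ := y
      rw [Subgroup.mem_comap]
      show τ (z * y) ∈ B
      have hee : τ (z * y) = b₀⁻¹ * (d * τ y) := by
        rw [map_mul, hzc', heq]; group
      rw [hee]
      exact B.mul_mem (B.inv_mem hb₀) hyB
    · obtain ⟨k, hk⟩ := k
      obtain ⟨hkA, hkB⟩ := Subgroup.mem_inf.mp hk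
      have hkB' : τ k ∈ B := hkB
      have hee : d * τ (z⁻¹ * k) = b₀ * τ k := by
        rw [map_mul, map_inv, hzc', heq]; group
      exact hee ▸ B.mul_mem hb₀ hkB'
  rw [eA, eB, auxCard A B hBA hnorm τ (hsupp τ)]

private lemma core3 {T : Type*} [Group T] [Fintype T] (A B : Subgroup T) (hBA : B ≤ A)
    (hnorm : ∀ a ∈ A, ∀ b ∈ B, a * b * a⁻¹ ∈ B)
    (hsupp : ∀ τ : MulAut T, ∀ a ∈ A, ∃ b ∈ B, ∃ c ∈ A ⊓ A.map τ.toMonoidHom, a = b * c)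
    (τ : MulAut T) (a b : T) :
    B.relIndex A * Nat.card {x : T // x ∈ A ∧ a * τ x * b ∈ B}
      = Nat.card {x : T // x ∈ A ∧ a * τ x * b ∈ A} := by
  by_cases h : ∃ x₀, x₀ ∈ A ∧ a * τ x₀ * b ∈ A
  · obtain ⟨x₀, hx₀A, hd⟩ := h
    set τ' : MulAut T := (MulAut.conj b⁻¹) * τ with hτ'
    have hτ'app : ∀ y : T, τ' y = b⁻¹ * τ y * b := by
      intro y; simp [hτ', MulAut.mul_apply, MulAut.conj_apply]
    set d : T := a * τ x₀ * b with hdd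
    have key : ∀ x : T, a * τ x * b = d * τ' (x₀⁻¹ * x) := by
      intro x; rw [hτ'app, hdd, map_mul, map_inv]; group
    have equivS : ∀ S : Subgroup T, Nat.card {x : T // x ∈ A ∧ a * τ x * b ∈ S}
        = Nat.card {y : T // y ∈ A ∧ d * τ' y ∈ S} := by
      intro S
      refine Nat.card_congr
        { toFun := fun x => ⟨x₀⁻¹ * x.1, A.mul_mem (A.inv_mem hx₀A) x.2.1, by
            rw [← key]; exact x.2.2⟩
          invFun := fun y => ⟨x₀ * y.1, A.mul_mem hx₀A y.2.1, by
            rw [key, inv_mul_cancel_left]; exact y.2.2⟩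
          left_inv := fun x => by ext; simp
          right_inv := fun y => by ext; simp }
    rw [equivS A, equivS B]
    exact core2 A B hBA hnorm hsupp τ' d hd
  · have e1 : Nat.card {x : T // x ∈ A ∧ a * τ x * b ∈ A} = 0 := by
      have : IsEmpty {x : T // x ∈ A ∧ a * τ x * b ∈ A} := ⟨fun x => h ⟨x.1, x.2⟩⟩
      exact Nat.card_of_isEmpty
    have e2 : Nat.card {x : T // x ∈ A ∧ a * τ x * b ∈ B} = 0 := by
      have : IsEmpty {x : T // x ∈ A ∧ a * τ x * b ∈ B} :=
        ⟨fun x => h ⟨x.1, x.2.1, hBA x.2.2⟩⟩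
      exact Nat.card_of_isEmpty
    rw [e1, e2, mul_zero]

private lemma diagW_form {T : Type*} [Group T] (g : Equiv.Perm T) (hg : g ∈ diagW T) :
    ∃ (τ : MulAut T) (a b : T), (∀ x, g x = a * τ x * b) ∨ (∀ x, g x = a * τ x⁻¹ * b) := by
  refine Subgroup.closure_induction
    (p := fun g _ => ∃ (τ : MulAut T) (a b : T),
      (∀ x, g x = a * τ x * b) ∨ (∀ x, g x = a * τ x⁻¹ * b)) ?_ ?_ ?_ ?_ hg
  · rintro e (( ⟨t₁, t₂, he⟩ | ⟨τ, he⟩ ) | he)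
    · exact ⟨1, t₁⁻¹, t₂, Or.inl fun x => by simpa using he x⟩
    · exact ⟨τ, 1, 1, Or.inl fun x => by simpa using he x⟩
    · exact ⟨1, 1, 1, Or.inr fun x => by simpa using he x⟩
  · exact ⟨1, 1, 1, Or.inl fun x => by simp⟩
  · rintro g h _ _ ⟨τ, a, b, hgf⟩ ⟨υ, c, d, hhf⟩
    have hmul : ∀ x, (g * h) x = g (h x) := fun x => rfl
    rcases hgf with hgf | hgf <;> rcases hhf with hhf | hhf
    · exact ⟨τ * υ, a * τ c, τ d * b, Or.inl fun x => by
        simp [hmul, hhf, hgf, MulAut.mul_apply, map_mul, mul_assoc]⟩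
    · exact ⟨τ * υ, a * τ c, τ d * b, Or.inr fun x => by
        simp [hmul, hhf, hgf, MulAut.mul_apply, map_mul, mul_assoc]⟩
    · exact ⟨τ * υ, a * τ d⁻¹, τ c⁻¹ * b, Or.inr fun x => by
        simp [hmul, hhf, hgf, MulAut.mul_apply, map_mul, map_inv, mul_assoc]⟩
    · exact ⟨τ * υ, a * τ d⁻¹, τ c⁻¹ * b, Or.inl fun x => by
        simp [hmul, hhf, hgf, MulAut.mul_apply, map_mul, map_inv, mul_assoc]⟩
  · rintro g _ ⟨τ, a, b, hgf⟩
    rcases hgf with hgf | hgf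
    · refine ⟨τ⁻¹, τ⁻¹ a⁻¹, τ⁻¹ b⁻¹, Or.inl fun y => ?_⟩
      apply g.injective
      rw [show g (g⁻¹ y) = y from Equiv.apply_symm_apply g y, hgf]
      simp [map_mul]
      group
    · refine ⟨τ⁻¹, τ⁻¹ b, τ⁻¹ a, Or.inr fun y => ?_⟩
      apply g.injective
      rw [show g (g⁻¹ y) = y from Equiv.apply_symm_apply g y, hgf]
      simp

private lemma count_ite {T : Type*} [Fintype T] (p : T → Prop) [DecidablePred p] (c : ℕ) :
    ∑ x : T, (if p x then c else 0) = c * Nat.card {x // p x} := by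
  rw [Finset.sum_ite, Finset.sum_const, Finset.sum_const_zero, add_zero, smul_eq_mul,
    Nat.card_eq_fintype_card, Fintype.card_subtype, mul_comm]

private lemma sum_plus {T : Type*} [Group T] [Fintype T] (A B : Subgroup T) (hBA : B ≤ A)
    (hnorm : ∀ a ∈ A, ∀ b ∈ B, a * b * a⁻¹ ∈ B)
    (hsupp : ∀ τ : MulAut T, ∀ a ∈ A, ∃ b ∈ B, ∃ c ∈ A ⊓ A.map τ.toMonoidHom, a = b * c)
    (τ : MulAut T) (a b : T) :
    ∑ x : T, (A : Set T).indicator (fun y => mufun A B (a * τ y * b)) x = Nat.card ↥A := by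
  classical
  have hpt : ∀ x : T, (A : Set T).indicator (fun y => mufun A B (a * τ y * b)) x
      = (if x ∈ A ∧ a * τ x * b ∈ B then B.relIndex A else 0)
        + (if x ∈ A ∧ ¬(a * τ x * b ∈ A) then 1 else 0) := by
    intro x
    simp only [Set.indicator_apply, mufun, Set.mem_compl_iff, SetLike.mem_coe]
    by_cases h1 : x ∈ A <;> by_cases h2 : a * τ x * b ∈ B <;>
      by_cases h3 : a * τ x * b ∈ A <;> simp [h1, h2, h3]
  rw [Finset.sum_congr rfl fun x _ => hpt x, Finset.sum_add_distrib, count_ite, count_ite, one_mul]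
  have hcore := core3 A B hBA hnorm hsupp τ a b
  have hsplit : Nat.card {x : T // x ∈ A ∧ a * τ x * b ∈ A}
      + Nat.card {x : T // x ∈ A ∧ ¬(a * τ x * b ∈ A)} = Nat.card ↥A := by
    simp only [Nat.card_eq_fintype_card, Fintype.card_subtype]
    rw [← Finset.filter_filter, ← Finset.filter_filter,
      Finset.card_filter_add_card_filter_not]
  omega

private lemma sum_g {T : Type*} [Group T] [Fintype T] (A B : Subgroup T) (hBA : B ≤ A)
    (hnorm : ∀ a ∈ A, ∀ b ∈ B, a * b * a⁻¹ ∈ B)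
    (hsupp : ∀ τ : MulAut T, ∀ a ∈ A, ∃ b ∈ B, ∃ c ∈ A ⊓ A.map τ.toMonoidHom, a = b * c)
    (g : Equiv.Perm T) (hg : g ∈ diagW T) :
    ∑ ω : T, (g • (A : Set T)).indicator (mufun A B) ω = Nat.card ↥A := by
  classical
  obtain ⟨τ, a, b, hform⟩ := diagW_form g hg
  have step1 : ∑ ω : T, (g • (A : Set T)).indicator (mufun A B) ω
      = ∑ x : T, (A : Set T).indicator (fun y => mufun A B (g y)) x := by
    rw [← Equiv.sum_comp g (fun ω => (g • (A : Set T)).indicator (mufun A B) ω)]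
    refine Finset.sum_congr rfl fun x _ => ?_
    simp only [Set.indicator_apply]
    exact if_congr (Set.smul_mem_smul_set_iff (a := g) (s := (A : Set T)) (x := x)) rfl rfl
  rw [step1]
  rcases hform with hform | hform
  · simp only [hform]
    exact sum_plus A B hBA hnorm hsupp τ a b
  · simp only [hform]
    have e1 : ∑ x : T, (A : Set T).indicator (fun y => mufun A B (a * τ y⁻¹ * b)) x
        = ∑ x : T, (A : Set T).indicator (fun y => mufun A B (a * τ y * b)) x := by
      rw [← Equiv.sum_comp (Equiv.inv T)
        (fun x => (A : Set T).indicator (fun y => mufun A B (a * τ y⁻¹ * b)) x)]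
      refine Finset.sum_congr rfl fun x _ => ?_
      simp only [Set.indicator_apply, Equiv.inv_apply, inv_inv, SetLike.mem_coe]
      exact if_congr (by simp) rfl rfl
    rw [e1]
    exact sum_plus A B hBA hnorm hsupp τ a b

/-- Corollary 2.3. Let `T` be a non-abelian finite simple group with a proper
subgroup `A` and a proper normal subgroup `B` of `A` such that `A = B(A ∩ A^τ)` for all
`τ ∈ Aut(T)`. Then `(A, Ω + |A:B|·B − A)` is a witness to `W(T)` being non-spreading in its
action on `Ω = T`; in particular `W(T)` is non-spreading. The multiplicity function of the
multiset `Ω + |A:B|·B − A` takes the value `|A:B|` on `B`, `0` on `A \ B` and `1` off `A`. -/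
theorem diagW_witness_of_supplement (T : Type*) [Group T] [Fintype T] [IsSimpleGroup T]
    (hna : ∃ a b : T, a * b ≠ b * a)
    (A B : Subgroup T) (hA : A ≠ ⊤) (hBA : B ≤ A) (hBneA : B ≠ A)
    (hnorm : ∀ a ∈ A, ∀ b ∈ B, a * b * a⁻¹ ∈ B)
    (hsupp : ∀ τ : MulAut T, ∀ a ∈ A, ∃ b ∈ B, ∃ c ∈ A ⊓ A.map τ.toMonoidHom, a = b * c) :
    SpreadingWitness ↥(diagW T) T (A : Set T)
        (fun x => (B : Set T).indicator (fun _ => B.relIndex A) x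
          + ((A : Set T)ᶜ).indicator (fun _ => 1) x) ∧
      IsNonSpreading ↥(diagW T) T := by
  classical
  have hμdef : (fun x => (B : Set T).indicator (fun _ => B.relIndex A) x
      + ((A : Set T)ᶜ).indicator (fun _ => 1) x) = mufun A B := rfl
  -- basic elements
  have hnotsub : ¬ (A : Set T) ⊆ (B : Set T) := fun h => hBneA (le_antisymm hBA h)
  obtain ⟨a₀, ha₀A, ha₀B⟩ := Set.not_subset.mp hnotsub
  have ht : ∃ t : T, t ∉ A := by
    by_contra h
    push_neg at h
    exact hA (Subgroup.eq_top_iff' A |>.mpr h)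
  obtain ⟨t₀, ht₀⟩ := ht
  haveI : Finite (↥A ⧸ B.subgroupOf A) := Quotient.finite _
  have hr0 : B.relIndex A ≠ 0 := Subgroup.index_ne_zero_of_finite
  -- values of μ
  have hμ1 : mufun A B 1 = B.relIndex A := by
    simp [mufun, Set.indicator_apply, B.one_mem, A.one_mem]
  have hμa₀ : mufun A B a₀ = 0 := by
    simp [mufun, Set.indicator_apply, ha₀B, ha₀A]
  have hμt₀ : mufun A B t₀ = 1 := by
    have : t₀ ∉ B := fun h => ht₀ (hBA h)
    simp [mufun, Set.indicator_apply, this, ht₀]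
  -- r * |B| = |A|
  have hAind : A.index ≠ 0 := Subgroup.index_ne_zero_of_finite
  have hrB : B.relIndex A * Nat.card ↥B = Nat.card ↥A := by
    have h1 : (B.relIndex A * Nat.card ↥B) * A.index = Nat.card ↥A * A.index := by
      calc (B.relIndex A * Nat.card ↥B) * A.index
          = Nat.card ↥B * (B.relIndex A * A.index) := by ring
        _ = Nat.card ↥B * B.index := by rw [Subgroup.relIndex_mul_index hBA]
        _ = Nat.card T := B.card_mul_index
        _ = Nat.card ↥A * A.index := (A.card_mul_index).symm
    exact Nat.eq_of_mul_eq_mul_right (Nat.pos_of_ne_zero hAind) h1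
  have hwit : SpreadingWitness ↥(diagW T) T (A : Set T) (mufun A B) := by
    refine ⟨?_, ?_, ?_, ?_⟩
    · -- nontrivial set
      rintro (h | h | h)
      · exact absurd (h ▸ (SetLike.mem_coe.mpr A.one_mem)) (Set.notMem_empty 1)
      · exact ht₀ (SetLike.mem_coe.mp (h.symm ▸ Set.mem_univ t₀))
      · obtain ⟨w, _, hu⟩ := h
        have h1 : (1 : T) = w := hu 1 (SetLike.mem_coe.mpr A.one_mem)
        have h2 : a₀ = w := hu a₀ ha₀A
        exact ha₀B (by rw [show a₀ = (1:T) from h2.trans h1.symm]; exact B.one_mem)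
    · -- nontrivial multiset
      rintro (h | h)
      · have := h 1 a₀
        rw [hμ1, hμa₀] at this
        exact hr0 this
      · obtain ⟨w, _, hu⟩ := h
        have h1 : (1 : T) = w := hu 1 (show mufun A B 1 ≠ 0 by rw [hμ1]; exact hr0)
        have h2 : t₀ = w := hu t₀ (show mufun A B t₀ ≠ 0 by rw [hμt₀]; exact one_ne_zero)
        have : t₀ = (1 : T) := h2.trans h1.symm
        exact ht₀ (this ▸ A.one_mem)
    · -- divisibility: total equals |T|
      have htot : ∑ ω : T, mufun A B ω = Fintype.card T := by
        have hpt : ∀ x : T, mufun A B x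
            = (if x ∈ B then B.relIndex A else 0) + (if ¬ (x ∈ A) then 1 else 0) := by
          intro x
          simp only [mufun, Set.indicator_apply, Set.mem_compl_iff, SetLike.mem_coe]
        rw [Finset.sum_congr rfl fun x _ => hpt x, Finset.sum_add_distrib,
          count_ite, count_ite, one_mul]
        have hB : Nat.card {x : T // x ∈ B} = Nat.card ↥B := rfl
        have hsplit : Nat.card {x : T // x ∈ A} + Nat.card {x : T // ¬ (x ∈ A)}
            = Fintype.card T := by
          simp only [Nat.card_eq_fintype_card, Fintype.card_subtype]
          rw [Finset.card_filter_add_card_filter_not, Finset.card_univ]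
        have hA' : Nat.card {x : T // x ∈ A} = Nat.card ↥A := rfl
        rw [hB, hrB]
        omega
      rw [htot]
    · -- constancy
      refine ⟨Nat.card ↥A, fun g => ?_⟩
      exact sum_g A B hBA hnorm hsupp g.1 g.2
  rw [hμdef]
  exact ⟨hwit, ⟨(A : Set T), mufun A B, hwit⟩⟩
end

section
/- Let n ≥ 7, let A_n be the alternating group on {1,…,n}, let A be the setwise stabiliser of {1,2,3} in A_n (so A = (S_3 × S_{n−3}) ∩ A_n), and let B ≤ A be the subgroup of all elements of A whose restriction to {1,2,3} is an even permutation of {1,2,3} and whose restriction to {4,…,n} is an even permutation of {4,…,n} (so B ≅ A_3 × A_{n−3}). Then B is a proper normal subgroup of A, and for every permutation σ ∈ S_n we have A = B(A ∩ σ^{-1}Aσ). -/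
open Equiv Equiv.Perm

theorem Equiv.Perm.apply_inv_self {β : Type*} (f : Equiv.Perm β) (x : β) : f (f⁻¹ x) = x :=
  f.apply_symm_apply x

theorem Equiv.Perm.inv_apply_self {β : Type*} (f : Equiv.Perm β) (x : β) : f⁻¹ (f x) = x :=
  f.symm_apply_apply x


/-- Let `n ≥ 7`, let `A` be the setwise stabiliser of `α = {0,1,2}` in the
alternating group on `Fin n` (so `A = (S_3 × S_{n−3}) ∩ A_n`), and let `B ≤ A` consist of the
elements whose restrictions to `α` and to its complement are both even (so `B ≅ A_3 × A_{n−3}`,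
described here as the products `h₁ * h₂` of even permutations with `h₁` fixing the complement
of `α` pointwise and `h₂` fixing `α` pointwise). Then `B` is a proper normal subgroup of `A`,
and for every `σ ∈ S_n` we have `A = B(A ∩ σ⁻¹Aσ)` (membership `c ∈ σ⁻¹Aσ` is expressed as
`σ * c * σ⁻¹ ∈ A`). -/
theorem alternating_three_subsets_supplement (n : ℕ) (hn : 7 ≤ n)
    (α : Set (Fin n)) (hα : α = {⟨0, by omega⟩, ⟨1, by omega⟩, ⟨2, by omega⟩})
    (A B : Subgroup (Equiv.Perm (Fin n)))
    (hA : ∀ g : Equiv.Perm (Fin n),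
      g ∈ A ↔ g ∈ alternatingGroup (Fin n) ∧ ∀ x, x ∈ α ↔ g x ∈ α)
    (hB : ∀ g : Equiv.Perm (Fin n),
      g ∈ B ↔ ∃ h₁ h₂ : Equiv.Perm (Fin n), g = h₁ * h₂ ∧
        h₁ ∈ alternatingGroup (Fin n) ∧ h₂ ∈ alternatingGroup (Fin n) ∧
        (∀ x ∉ α, h₁ x = x) ∧ (∀ x ∈ α, h₂ x = x)) :
    B ≤ A ∧ B ≠ A ∧ (∀ a ∈ A, ∀ b ∈ B, a * b * a⁻¹ ∈ B) ∧
      ∀ σ : Equiv.Perm (Fin n), ∀ a ∈ A,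
        ∃ b ∈ B, ∃ c ∈ A, σ * c * σ⁻¹ ∈ A ∧ a = b * c := by
  classical
  obtain ⟨a0, a1, a2, memα, h01, h02, h12⟩ :
      ∃ a0 a1 a2 : Fin n, (∀ x, x ∈ α ↔ x = a0 ∨ x = a1 ∨ x = a2) ∧
        a0 ≠ a1 ∧ a0 ≠ a2 ∧ a1 ≠ a2 := by
    refine ⟨⟨0, by omega⟩, ⟨1, by omega⟩, ⟨2, by omega⟩, ?_, ?_, ?_, ?_⟩
    · intro x; rw [hα]; simp [Set.mem_insert_iff]
    all_goals simp [Fin.ext_iff]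
  have ha0 : a0 ∈ α := (memα a0).2 (Or.inl rfl)
  have ha1 : a1 ∈ α := (memα a1).2 (Or.inr (Or.inl rfl))
  have ha2 : a2 ∈ α := (memα a2).2 (Or.inr (Or.inr rfl))
  -- picking two fresh points outside any small finset
  have hpick : ∀ S : Finset (Fin n), S.card ≤ 5 →
      ∃ w z : Fin n, w ≠ z ∧ w ∉ S ∧ z ∉ S := by
    intro S hS
    have hcard : 1 < Sᶜ.card := by
      have h1 : Sᶜ.card = Fintype.card (Fin n) - S.card := Finset.card_compl S
      have h2 : Fintype.card (Fin n) = n := Fintype.card_fin n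
      omega
    obtain ⟨w, hw, z, hz, hwz⟩ := Finset.one_lt_card.1 hcard
    exact ⟨w, z, hwz, Finset.mem_compl.1 hw, Finset.mem_compl.1 hz⟩
  -- characterisation of B via the sign of the restriction to α
  have hBiff : ∀ (g : Equiv.Perm (Fin n)) (hg : ∀ x, x ∈ α ↔ g x ∈ α),
      (g ∈ B ↔ g ∈ alternatingGroup (Fin n) ∧
        Equiv.Perm.sign (g.subtypePerm (fun x => (hg x).symm)) = 1) := by
    intro g hg
    constructor
    · intro hgB
      obtain ⟨h₁, h₂, hge, hh₁, hh₂, hfix₁, hfix₂⟩ := (hB g).1 hgB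
      have hmem : g ∈ alternatingGroup (Fin n) := hge ▸ mul_mem hh₁ hh₂
      have key : Equiv.Perm.ofSubtype (g.subtypePerm (fun x => (hg x).symm)) = h₁ := by
        apply Equiv.ext
        intro x
        by_cases hx : x ∈ α
        · rw [Equiv.Perm.ofSubtype_apply_of_mem _ hx]
          show g x = h₁ x
          rw [hge]
          show h₁ (h₂ x) = h₁ x
          rw [hfix₂ x hx]
        · rw [Equiv.Perm.ofSubtype_apply_of_not_mem _ hx]
          exact (hfix₁ x hx).symm
      refine ⟨hmem, ?_⟩
      have := Equiv.Perm.sign_ofSubtype (g.subtypePerm (fun x => (hg x).symm))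
      rw [key] at this
      rw [← this]
      exact mem_alternatingGroup.1 hh₁
    · rintro ⟨hmem, hsgn⟩
      refine (hB g).2 ⟨Equiv.Perm.ofSubtype (g.subtypePerm (fun x => (hg x).symm)),
        (Equiv.Perm.ofSubtype (g.subtypePerm (fun x => (hg x).symm)))⁻¹ * g,
        (mul_inv_cancel_left _ _).symm, ?_, ?_, ?_, ?_⟩
      · rw [mem_alternatingGroup, Equiv.Perm.sign_ofSubtype]; exact hsgn
      · rw [mem_alternatingGroup, map_mul, map_inv, Equiv.Perm.sign_ofSubtype, hsgn,
          mem_alternatingGroup.1 hmem]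
        simp
      · intro x hx
        exact Equiv.Perm.ofSubtype_apply_of_not_mem _ hx
      · intro x hx
        have h1 : Equiv.Perm.ofSubtype (g.subtypePerm (fun x => (hg x).symm)) x = g x := by
          rw [Equiv.Perm.ofSubtype_apply_of_mem _ hx, Equiv.Perm.subtypePerm_apply]
        show (Equiv.Perm.ofSubtype (g.subtypePerm (fun x => (hg x).symm)))⁻¹ (g x) = x
        rw [← h1, Equiv.Perm.inv_apply_self]
  -- every element of B stabilises α
  have hBstab : ∀ g ∈ B, ∀ x, x ∈ α ↔ g x ∈ α := by
    intro g hgB x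
    obtain ⟨h₁, h₂, hge, _, _, hfix₁, hfix₂⟩ := (hB g).1 hgB
    have k₁ : ∀ y, y ∈ α → h₁ y ∈ α := by
      intro y hy
      by_contra hny
      have h2 : h₁ y = y := h₁.injective (hfix₁ _ hny)
      rw [h2] at hny; exact hny hy
    have k₂ : ∀ y, y ∉ α → h₂ y ∉ α := by
      intro y hy hmem
      have h2 : h₂ y = y := h₂.injective (hfix₂ _ hmem)
      rw [h2] at hmem; exact hy hmem
    constructor
    · intro hx
      rw [hge]
      show h₁ (h₂ x) ∈ α
      rw [hfix₂ x hx]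
      exact k₁ x hx
    · intro hx
      by_contra hnx
      rw [hge] at hx
      have h3 : h₁ (h₂ x) = h₂ x := hfix₁ _ (k₂ x hnx)
      have : h₁ (h₂ x) ∈ α := hx
      rw [h3] at this
      exact k₂ x hnx this
  have hBleA : B ≤ A := fun g hg =>
    (hA g).2 ⟨((hBiff g (hBstab g hg)).1 hg).1, hBstab g hg⟩
  -- elements of A not in B have restriction of sign -1
  have notB_sign : ∀ g ∈ A, g ∉ B → ∀ hg : ∀ x, x ∈ α ↔ g x ∈ α,
      Equiv.Perm.sign (g.subtypePerm (fun x => (hg x).symm)) = -1 := by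
    intro g hgA hgB hg
    rcases Int.units_eq_one_or (Equiv.Perm.sign (g.subtypePerm (fun x => (hg x).symm))) with h | h
    · exact absurd ((hBiff g hg).2 ⟨((hA g).1 hgA).1, h⟩) hgB
    · exact h
  -- double transposition evaluation
  have hswap : ∀ u v w z : Fin n, u ≠ v → w ≠ z → u ≠ w → u ≠ z → v ≠ w → v ≠ z →
      (Equiv.swap u v * Equiv.swap w z) u = v ∧
      (Equiv.swap u v * Equiv.swap w z) v = u ∧
      (Equiv.swap u v * Equiv.swap w z) w = z ∧
      (Equiv.swap u v * Equiv.swap w z) z = w ∧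
      ∀ x, x ≠ u → x ≠ v → x ≠ w → x ≠ z →
        (Equiv.swap u v * Equiv.swap w z) x = x := by
    intro u v w z huv hwz huw huz hvw hvz
    refine ⟨?_, ?_, ?_, ?_, ?_⟩
    · rw [Equiv.Perm.mul_apply, Equiv.swap_apply_of_ne_of_ne huw huz,
        Equiv.swap_apply_left]
    · rw [Equiv.Perm.mul_apply, Equiv.swap_apply_of_ne_of_ne hvw hvz,
        Equiv.swap_apply_right]
    · rw [Equiv.Perm.mul_apply, Equiv.swap_apply_left,
        Equiv.swap_apply_of_ne_of_ne (Ne.symm huz) (Ne.symm hvz)]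
    · rw [Equiv.Perm.mul_apply, Equiv.swap_apply_right,
        Equiv.swap_apply_of_ne_of_ne (Ne.symm huw) (Ne.symm hvw)]
    · intro x hxu hxv hxw hxz
      rw [Equiv.Perm.mul_apply, Equiv.swap_apply_of_ne_of_ne hxw hxz,
        Equiv.swap_apply_of_ne_of_ne hxu hxv]
  -- the construction lemma
  have hC : ∀ (σ : Equiv.Perm (Fin n)) (u v w z : Fin n), u ∈ α → v ∈ α →
      w ∉ α → z ∉ α → u ≠ v → w ≠ z → (σ u ∈ α ↔ σ v ∈ α) → (σ w ∈ α ↔ σ z ∈ α) →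
      ∃ c, c ∈ A ∧ c ∉ B ∧ σ * c * σ⁻¹ ∈ A := by
    intro σ u v w z hu hv hw hz huv hwz hβuv hβwz
    have huw : u ≠ w := fun h => hw (h ▸ hu)
    have huz : u ≠ z := fun h => hz (h ▸ hu)
    have hvw : v ≠ w := fun h => hw (h ▸ hv)
    have hvz : v ≠ z := fun h => hz (h ▸ hv)
    obtain ⟨e1, e2, e3, e4, e5⟩ := hswap u v w z huv hwz huw huz hvw hvz
    set c := Equiv.swap u v * Equiv.swap w z with hc
    have hsgn : Equiv.Perm.sign c = 1 := by
      rw [hc, map_mul, Equiv.Perm.sign_swap huv, Equiv.Perm.sign_swap hwz]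
      simp
    have hcA : ∀ x, x ∈ α ↔ c x ∈ α := by
      intro x
      by_cases hxu : x = u
      · subst hxu; rw [e1]; exact iff_of_true hu hv
      by_cases hxv : x = v
      · subst hxv; rw [e2]; exact iff_of_true hv hu
      by_cases hxw : x = w
      · subst hxw; rw [e3]; exact iff_of_false hw hz
      by_cases hxz : x = z
      · subst hxz; rw [e4]; exact iff_of_false hz hw
      rw [e5 x hxu hxv hxw hxz]
    have hmemA : c ∈ A := (hA c).2 ⟨mem_alternatingGroup.2 hsgn, hcA⟩
    have hβ : ∀ y, σ y ∈ α ↔ σ (c y) ∈ α := by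
      intro y
      by_cases hyu : y = u
      · subst hyu; rw [e1]; exact hβuv
      by_cases hyv : y = v
      · subst hyv; rw [e2]; exact hβuv.symm
      by_cases hyw : y = w
      · subst hyw; rw [e3]; exact hβwz
      by_cases hyz : y = z
      · subst hyz; rw [e4]; exact hβwz.symm
      rw [e5 y hyu hyv hyw hyz]
    have hconjA : σ * c * σ⁻¹ ∈ A := by
      refine (hA _).2 ⟨mem_alternatingGroup.2 ?_, ?_⟩
      · rw [map_mul, map_mul, map_inv, hsgn, mul_one]
        simp
      · intro x
        have h1 : (σ * c * σ⁻¹) x = σ (c (σ⁻¹ x)) := rfl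
        rw [h1]
        have h2 := hβ (σ⁻¹ x)
        rw [Equiv.Perm.apply_inv_self] at h2
        exact h2
    have hnB : c ∉ B := by
      intro hcB
      have hs := ((hBiff c hcA).1 hcB).2
      have heq : c.subtypePerm (fun x => (hcA x).symm) =
          Equiv.swap (⟨u, hu⟩ : {x // x ∈ α}) ⟨v, hv⟩ := by
        apply Equiv.ext
        rintro ⟨x, hx⟩
        apply Subtype.ext
        rw [Equiv.Perm.subtypePerm_apply]
        by_cases hxu : x = u
        · subst hxu
          rw [show (⟨x, hx⟩ : {x // x ∈ α}) = ⟨x, hu⟩ from rfl, Equiv.swap_apply_left]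
          exact e1
        by_cases hxv : x = v
        · subst hxv
          rw [show (⟨x, hx⟩ : {x // x ∈ α}) = ⟨x, hv⟩ from rfl, Equiv.swap_apply_right]
          exact e2
        · have hxw : x ≠ w := fun h => hw (h ▸ hx)
          have hxz : x ≠ z := fun h => hz (h ▸ hx)
          rw [Equiv.swap_apply_of_ne_of_ne (fun h => hxu (Subtype.ext_iff.1 h))
            (fun h => hxv (Subtype.ext_iff.1 h))]
          exact e5 x hxu hxv hxw hxz
      rw [heq, Equiv.Perm.sign_swap (fun h => huv (Subtype.ext_iff.1 h))] at hs
      exact absurd hs (by decide)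
    exact ⟨c, hmemA, hnB, hconjA⟩
  -- case I: two points of α ∩ β
  have caseI : ∀ (σ : Equiv.Perm (Fin n)) (u v e : Fin n), u ∈ α → v ∈ α →
      σ u ∈ α → σ v ∈ α → u ≠ v → (∀ y, σ y ∈ α → y ∈ α ∨ y = e) →
      ∃ c, c ∈ A ∧ c ∉ B ∧ σ * c * σ⁻¹ ∈ A := by
    intro σ u v e hu hv hσu hσv huv hcov
    obtain ⟨w, z, hwz, hwS, hzS⟩ := hpick {a0, a1, a2, e} (by
      apply le_trans (Finset.card_insert_le _ _)
      have := Finset.card_insert_le a1 ({a2, e} : Finset (Fin n))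
      have := Finset.card_insert_le a2 ({e} : Finset (Fin n))
      have := Finset.card_singleton e
      omega)
    simp only [Finset.mem_insert, Finset.mem_singleton, not_or] at hwS hzS
    obtain ⟨hw0, hw1, hw2, hwe⟩ := hwS
    obtain ⟨hz0, hz1, hz2, hze⟩ := hzS
    have hwα : w ∉ α := by rw [memα]; tauto
    have hzα : z ∉ α := by rw [memα]; tauto
    have hσw : σ w ∉ α := fun h => by rcases hcov w h with h' | h' <;> [exact hwα h'; exact hwe h']
    have hσz : σ z ∉ α := fun h => by rcases hcov z h with h' | h' <;> [exact hzα h'; exact hze h']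
    exact hC σ u v w z hu hv hwα hzα huv hwz (iff_of_true hσu hσv) (iff_of_false hσw hσz)
  -- case II: two points of β \ α
  have caseII : ∀ (σ : Equiv.Perm (Fin n)) (w z e : Fin n), w ∉ α → z ∉ α →
      σ w ∈ α → σ z ∈ α → w ≠ z → (∀ y, y ∈ α → σ y ∈ α → y = e) →
      ∃ c, c ∈ A ∧ c ∉ B ∧ σ * c * σ⁻¹ ∈ A := by
    intro σ w z e hw hz hσw hσz hwz hcov
    by_cases he0 : a0 = e
    · have hσ1 : σ a1 ∉ α := fun h => h01 (he0.trans (hcov a1 ha1 h).symm)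
      have hσ2 : σ a2 ∉ α := fun h => h02 (he0.trans (hcov a2 ha2 h).symm)
      exact hC σ a1 a2 w z ha1 ha2 hw hz h12 hwz (iff_of_false hσ1 hσ2)
        (iff_of_true hσw hσz)
    · by_cases he1 : a1 = e
      · have hσ0 : σ a0 ∉ α := fun h => he0 (hcov a0 ha0 h)
        have hσ2 : σ a2 ∉ α := fun h => h12 (he1.trans (hcov a2 ha2 h).symm)
        exact hC σ a0 a2 w z ha0 ha2 hw hz h02 hwz (iff_of_false hσ0 hσ2)
          (iff_of_true hσw hσz)
      · have hσ0 : σ a0 ∉ α := fun h => he0 (hcov a0 ha0 h)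
        have hσ1 : σ a1 ∉ α := fun h => he1 (hcov a1 ha1 h)
        exact hC σ a0 a1 w z ha0 ha1 hw hz h01 hwz (iff_of_false hσ0 hσ1)
          (iff_of_true hσw hσz)
  -- existence of the odd element of A ∩ σ⁻¹Aσ for each σ
  have hexists : ∀ σ : Equiv.Perm (Fin n), ∃ c, c ∈ A ∧ c ∉ B ∧ σ * c * σ⁻¹ ∈ A := by
    intro σ
    have hs0 : σ (σ⁻¹ a0) = a0 := Equiv.Perm.apply_inv_self σ a0
    have hs1 : σ (σ⁻¹ a1) = a1 := Equiv.Perm.apply_inv_self σ a1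
    have hs2 : σ (σ⁻¹ a2) = a2 := Equiv.Perm.apply_inv_self σ a2
    have hσ0 : σ (σ⁻¹ a0) ∈ α := by rw [hs0]; exact ha0
    have hσ1 : σ (σ⁻¹ a1) ∈ α := by rw [hs1]; exact ha1
    have hσ2 : σ (σ⁻¹ a2) ∈ α := by rw [hs2]; exact ha2
    have hne01 : σ⁻¹ a0 ≠ σ⁻¹ a1 := fun h => h01 (by
      have := congrArg σ h; rwa [hs0, hs1] at this)
    have hne02 : σ⁻¹ a0 ≠ σ⁻¹ a2 := fun h => h02 (by
      have := congrArg σ h; rwa [hs0, hs2] at this)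
    have hne12 : σ⁻¹ a1 ≠ σ⁻¹ a2 := fun h => h12 (by
      have := congrArg σ h; rwa [hs1, hs2] at this)
    -- any y with σ y ∈ α is one of the three preimages
    have hpre : ∀ y, σ y ∈ α → y = σ⁻¹ a0 ∨ y = σ⁻¹ a1 ∨ y = σ⁻¹ a2 := by
      intro y hy
      rw [memα] at hy
      rcases hy with h | h | h
      · left; rw [← h, Equiv.Perm.inv_apply_self]
      · right; left; rw [← h, Equiv.Perm.inv_apply_self]
      · right; right; rw [← h, Equiv.Perm.inv_apply_self]
    by_cases h0 : σ⁻¹ a0 ∈ α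
    · by_cases h1 : σ⁻¹ a1 ∈ α
      · refine caseI σ (σ⁻¹ a0) (σ⁻¹ a1) (σ⁻¹ a2) h0 h1 hσ0 hσ1 hne01 ?_
        intro y hy
        rcases hpre y hy with h | h | h
        · left; rw [h]; exact h0
        · left; rw [h]; exact h1
        · right; exact h
      · by_cases h2 : σ⁻¹ a2 ∈ α
        · refine caseI σ (σ⁻¹ a0) (σ⁻¹ a2) (σ⁻¹ a1) h0 h2 hσ0 hσ2 hne02 ?_
          intro y hy
          rcases hpre y hy with h | h | h
          · left; rw [h]; exact h0
          · right; exact h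
          · left; rw [h]; exact h2
        · refine caseII σ (σ⁻¹ a1) (σ⁻¹ a2) (σ⁻¹ a0) h1 h2 hσ1 hσ2 hne12 ?_
          intro y hyα hy
          rcases hpre y hy with h | h | h
          · exact h
          · exact absurd (h ▸ hyα) h1
          · exact absurd (h ▸ hyα) h2
    · by_cases h1 : σ⁻¹ a1 ∈ α
      · by_cases h2 : σ⁻¹ a2 ∈ α
        · refine caseI σ (σ⁻¹ a1) (σ⁻¹ a2) (σ⁻¹ a0) h1 h2 hσ1 hσ2 hne12 ?_
          intro y hy
          rcases hpre y hy with h | h | h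
          · right; exact h
          · left; rw [h]; exact h1
          · left; rw [h]; exact h2
        · refine caseII σ (σ⁻¹ a0) (σ⁻¹ a2) (σ⁻¹ a1) h0 h2 hσ0 hσ2 hne02 ?_
          intro y hyα hy
          rcases hpre y hy with h | h | h
          · exact absurd (h ▸ hyα) h0
          · exact h
          · exact absurd (h ▸ hyα) h2
      · refine caseII σ (σ⁻¹ a0) (σ⁻¹ a1) (σ⁻¹ a2) h0 h1 hσ0 hσ1 hne01 ?_
        intro y hyα hy
        rcases hpre y hy with h | h | h
        · exact absurd (h ▸ hyα) h0
        · exact absurd (h ▸ hyα) h1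
        · exact h
  refine ⟨hBleA, ?_, ?_, ?_⟩
  -- B ≠ A
  · intro hBA
    obtain ⟨c, hcA, hcB, _⟩ := hexists 1
    rw [hBA] at hcB
    exact hcB hcA
  -- normality
  · intro a haA b hbB
    obtain ⟨evena, staba⟩ := (hA a).1 haA
    have stabb := hBstab b hbB
    obtain ⟨evenb, signb⟩ := (hBiff b stabb).1 hbB
    have stabai : ∀ x, x ∈ α ↔ a⁻¹ x ∈ α := by
      intro x
      conv_lhs => rw [← Equiv.Perm.apply_inv_self a x]
      exact (staba (a⁻¹ x)).symm
    have stabconj : ∀ x, x ∈ α ↔ (a * b * a⁻¹) x ∈ α := by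
      intro x
      have : (a * b * a⁻¹) x = a (b (a⁻¹ x)) := rfl
      rw [this]
      exact (stabai x).trans ((stabb _).trans (staba _))
    refine (hBiff _ stabconj).2 ⟨mul_mem (mul_mem ((hA a).1 haA).1 evenb)
      (inv_mem ((hA a).1 haA).1), ?_⟩
    have stabab : ∀ x, x ∈ α ↔ (a * b) x ∈ α := fun x => (stabb x).trans (staba _)
    have key : (a * b * a⁻¹).subtypePerm (fun x => (stabconj x).symm) =
        a.subtypePerm (fun x => (staba x).symm) * b.subtypePerm (fun x => (stabb x).symm) * (a.subtypePerm (fun x => (staba x).symm))⁻¹ := rfl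
    rw [key, map_mul, map_mul, map_inv, signb, mul_one]
    simp
  -- the factorisation
  · intro σ a haA
    by_cases hab : a ∈ B
    · refine ⟨a, hab, 1, one_mem A, ?_, (mul_one a).symm⟩
      simpa using one_mem A
    · obtain ⟨c, hcA, hcB, hconj⟩ := hexists σ
      refine ⟨a * c⁻¹, ?_, c, hcA, hconj, (inv_mul_cancel_right a c).symm⟩
      obtain ⟨evena, staba⟩ := (hA a).1 haA
      obtain ⟨evenc, stabc⟩ := (hA c).1 hcA
      have stabci : ∀ x, x ∈ α ↔ c⁻¹ x ∈ α := by
        intro x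
        conv_lhs => rw [← Equiv.Perm.apply_inv_self c x]
        exact (stabc (c⁻¹ x)).symm
      have stabaci : ∀ x, x ∈ α ↔ (a * c⁻¹) x ∈ α := fun x =>
        (stabci x).trans (staba _)
      refine (hBiff _ stabaci).2 ⟨mul_mem evena (inv_mem evenc), ?_⟩
      have key : (a * c⁻¹).subtypePerm (fun x => (stabaci x).symm) =
          a.subtypePerm (fun x => (staba x).symm) * (c.subtypePerm (fun x => (stabc x).symm))⁻¹ := rfl
      rw [key, map_mul, map_inv, notB_sign a haA hab staba, notB_sign c hcA hcB stabc]
      decide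
end
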